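/- Let n, m ≥ 1, let Ω ⊆ ℝⁿ be open, let u : Ω → ℝ^m be continuously differentiable with ∫_Ω ‖Du(y)‖² dy < ∞, let Q ⊆ ℝⁿ be measurable, ε₀ > 0, and let η₁, η₂ : Q → Ω be maps such that for every s ∈ [0,1] the convex interpolation π_s := s·η₁ + (1−s)·η₂ maps Q injectively into Ω, is differentiable, and satisfies det Dπ_s(x) ≥ ε₀ for all x ∈ Q. Then ∫_Q |u(η₁(x)) − u(η₂(x))|² dx ≤ (1/ε₀)·( ∫_Ω ‖Du(y)‖² dy )·( sup_{x∈Q} |η₁(x) − η₂(x)| )². -/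

import Mathlib

open MeasureTheory

/-- The Frobenius norm of a continuous linear map between Euclidean spaces,
viewed as a matrix in the standard bases. -/
noncomputable def clmFrob {n m : ℕ}
    (f : EuclideanSpace ℝ (Fin n) →L[ℝ] EuclideanSpace ℝ (Fin m)) : ℝ :=
  Real.sqrt (∑ j, ‖f (EuclideanSpace.single j 1)‖ ^ 2)

lemma clmFrob_nonneg {n m : ℕ} (f : EuclideanSpace ℝ (Fin n) →L[ℝ] EuclideanSpace ℝ (Fin m)) :
    0 ≤ clmFrob f := Real.sqrt_nonneg _

lemma norm_apply_le_clmFrob {n m : ℕ} (f : EuclideanSpace ℝ (Fin n) →L[ℝ] EuclideanSpace ℝ (Fin m))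
    (v : EuclideanSpace ℝ (Fin n)) : ‖f v‖ ≤ clmFrob f * ‖v‖ := by
  have hv : v = ∑ j, v j • EuclideanSpace.single j (1:ℝ) := by
    have := (EuclideanSpace.basisFun (Fin n) ℝ).sum_repr v
    simp only [EuclideanSpace.basisFun_repr, EuclideanSpace.basisFun_apply] at this
    exact this.symm
  calc ‖f v‖ = ‖∑ j, v j • f (EuclideanSpace.single j 1)‖ := by
        conv_lhs => rw [hv]
        simp [map_sum]
    _ ≤ ∑ j, ‖v j • f (EuclideanSpace.single j 1)‖ := norm_sum_le _ _
    _ = ∑ j, |v j| * ‖f (EuclideanSpace.single j 1)‖ := by simp [norm_smul]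
    _ ≤ Real.sqrt (∑ j, |v j| ^ 2) * Real.sqrt (∑ j, ‖f (EuclideanSpace.single j 1)‖ ^ 2) :=
        Real.sum_mul_le_sqrt_mul_sqrt _ _ _
    _ = clmFrob f * ‖v‖ := by
        rw [mul_comm, clmFrob]
        congr 1
        rw [EuclideanSpace.norm_eq]
        simp

lemma continuous_clmFrob {n m : ℕ} :
    Continuous (clmFrob (n := n) (m := m)) := by
  unfold clmFrob
  exact Real.continuous_sqrt.comp (continuous_finset_sum _ fun j _ =>
    ((ContinuousLinearMap.apply ℝ (EuclideanSpace ℝ (Fin m))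
      (EuclideanSpace.single j 1)).continuous.norm.pow 2))

instance : IsProbabilityMeasure (volume.restrict (Set.Ioc (0:ℝ) 1)) :=
  ⟨by simp [Measure.restrict_apply_univ]⟩

lemma sq_integral_le_prob {α : Type*} [MeasurableSpace α] (μ : Measure α) [IsProbabilityMeasure μ]
    {f : α → ℝ} (hf : Integrable f μ) (hf2 : Integrable (fun x => f x ^ 2) μ) :
    (∫ x, f x ∂μ) ^ 2 ≤ ∫ x, f x ^ 2 ∂μ := by
  have hg : ConvexOn ℝ Set.univ (fun x : ℝ => x ^ 2) := Even.convexOn_pow even_two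
  exact hg.map_integral_le (continuous_pow 2).continuousOn isClosed_univ
    (Filter.Eventually.of_forall fun x => Set.mem_univ _) hf hf2

lemma segment_estimate {n m : ℕ} {Ω : Set (EuclideanSpace ℝ (Fin n))} (hΩ : IsOpen Ω)
    {u : EuclideanSpace ℝ (Fin n) → EuclideanSpace ℝ (Fin m)} (hu : ContDiffOn ℝ 1 u Ω)
    {a v : EuclideanSpace ℝ (Fin n)}
    (hseg : ∀ s ∈ Set.Icc (0:ℝ) 1, a + s • v ∈ Ω) :
    ‖u (a + v) - u a‖ ≤ (∫ s in (0:ℝ)..1, clmFrob (fderiv ℝ u (a + s • v))) * ‖v‖ := by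
  set γ : ℝ → EuclideanSpace ℝ (Fin n) := fun s => a + s • v with hγ
  have hγcont : Continuous γ := by fun_prop
  have hfd : ContinuousOn (fderiv ℝ u) Ω := hu.continuousOn_fderiv_of_isOpen hΩ le_rfl
  have hDcont : ContinuousOn (fun s => fderiv ℝ u (γ s)) (Set.Icc (0:ℝ) 1) :=
    hfd.comp hγcont.continuousOn hseg
  have hder : ∀ s ∈ Set.Icc (0:ℝ) 1,
      HasDerivAt (fun t => u (γ t)) ((fderiv ℝ u (γ s)) v) s := by
    intro s hs
    have h1 : HasDerivAt γ v s := by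
      exact (by simpa using ((hasDerivAt_id s).smul_const v) : HasDerivAt (fun t : ℝ => t • v) v s).const_add a
    have h2 : HasFDerivAt u (fderiv ℝ u (γ s)) (γ s) :=
      ((hu.contDiffAt (hΩ.mem_nhds (hseg s hs))).differentiableAt one_ne_zero).hasFDerivAt
    exact h2.comp_hasDerivAt s h1
  have hDvcont : ContinuousOn (fun s => (fderiv ℝ u (γ s)) v) (Set.Icc (0:ℝ) 1) :=
    (ContinuousLinearMap.apply ℝ (EuclideanSpace ℝ (Fin m)) v).continuous.comp_continuousOn hDcont
  have hInt : IntervalIntegrable (fun s => (fderiv ℝ u (γ s)) v) volume 0 1 :=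
    (hDvcont.mono (by rw [Set.uIcc_of_le zero_le_one])).intervalIntegrable
  have hftc : ∫ s in (0:ℝ)..1, (fderiv ℝ u (γ s)) v = u (γ 1) - u (γ 0) :=
    intervalIntegral.integral_eq_sub_of_hasDerivAt
      (fun s hs => hder s (by rwa [Set.uIcc_of_le zero_le_one] at hs)) hInt
  have hγ1 : γ 1 = a + v := by simp [hγ]
  have hγ0 : γ 0 = a := by simp [hγ]
  have main : ‖u (γ 1) - u (γ 0)‖ ≤ (∫ s in (0:ℝ)..1, clmFrob (fderiv ℝ u (γ s))) * ‖v‖ := by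
    rw [← hftc]
    refine le_trans (intervalIntegral.norm_integral_le_integral_norm zero_le_one) ?_
    rw [← intervalIntegral.integral_mul_const]
    apply intervalIntegral.integral_mono_on zero_le_one
    · exact (hDvcont.norm.mono (by rw [Set.uIcc_of_le zero_le_one])).intervalIntegrable
    · exact (((continuous_clmFrob.comp_continuousOn hDcont).mul continuousOn_const).mono
        (by rw [Set.uIcc_of_le zero_le_one])).intervalIntegrable
    · exact fun s _ => norm_apply_le_clmFrob _ _
  rw [hγ1, hγ0] at main
  exact main

/-- **Composition-continuity estimate** used to identify the limit of `u⁽τ⁾ ∘ η⁽τ⁾`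
(paper, proof of the convergence Proposition in Section 2.2):
`∫_Q |u∘η₁ − u∘η₂|² ≤ (1/ε₀) (∫_Ω ‖Du‖²) (sup_Q |η₁ − η₂|)²`,
where the supremum is expressed through an arbitrary upper bound `S`. -/
theorem composition_continuity (n m : ℕ) (hn : 1 ≤ n) (hm : 1 ≤ m)
    (Ω : Set (EuclideanSpace ℝ (Fin n))) (hΩ : IsOpen Ω)
    (u : EuclideanSpace ℝ (Fin n) → EuclideanSpace ℝ (Fin m))
    (hu : ContDiffOn ℝ 1 u Ω)
    (hint : IntegrableOn (fun y => clmFrob (fderiv ℝ u y) ^ 2) Ω)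
    (Q : Set (EuclideanSpace ℝ (Fin n))) (hQ : MeasurableSet Q)
    (ε₀ : ℝ) (hε₀ : 0 < ε₀)
    (η₁ η₂ : EuclideanSpace ℝ (Fin n) → EuclideanSpace ℝ (Fin n))
    (hπ : ∀ s ∈ Set.Icc (0 : ℝ) 1,
      Set.MapsTo (fun x => s • η₁ x + (1 - s) • η₂ x) Q Ω ∧
      Set.InjOn (fun x => s • η₁ x + (1 - s) • η₂ x) Q ∧
      ∀ x ∈ Q, DifferentiableAt ℝ (fun x' => s • η₁ x' + (1 - s) • η₂ x') x ∧
        ε₀ ≤ (fderiv ℝ (fun x' => s • η₁ x' + (1 - s) • η₂ x') x).det)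
    (S : ℝ) (hS : ∀ x ∈ Q, ‖η₁ x - η₂ x‖ ≤ S) :
    (∫ x in Q, ‖u (η₁ x) - u (η₂ x)‖ ^ 2) ≤
      1 / ε₀ * (∫ y in Ω, clmFrob (fderiv ℝ u y) ^ 2) * S ^ 2 := by
  set g : EuclideanSpace ℝ (Fin n) → ℝ := fun y => clmFrob (fderiv ℝ u y) with hg
  have hg0 : ∀ y, 0 ≤ g y := fun y => clmFrob_nonneg _
  have hfd : ContinuousOn (fderiv ℝ u) Ω := hu.continuousOn_fderiv_of_isOpen hΩ le_rfl
  have hgcont : ContinuousOn g Ω := continuous_clmFrob.comp_continuousOn hfd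
  set I : ℝ := ∫ y in Ω, g y ^ 2 with hI
  have hI0 : 0 ≤ I := setIntegral_nonneg hΩ.measurableSet fun y _ => by positivity
  have hRHS0 : 0 ≤ 1 / ε₀ * I * S ^ 2 :=
    mul_nonneg (mul_nonneg (by positivity) hI0) (sq_nonneg S)
  have hπg : ∀ (s : ℝ) (x : EuclideanSpace ℝ (Fin n)),
      η₂ x + s • (η₁ x - η₂ x) = s • η₁ x + (1 - s) • η₂ x := by
    intro s x
    module
  -- pointwise estimate
  have key : ∀ x ∈ Q, ENNReal.ofReal (‖u (η₁ x) - u (η₂ x)‖ ^ 2) ≤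
      (∫⁻ s in Set.Ioc (0:ℝ) 1, ENNReal.ofReal (g (s • η₁ x + (1 - s) • η₂ x) ^ 2)) *
        ENNReal.ofReal (S ^ 2) := by
    intro x hx
    set a := η₂ x with ha
    set v := η₁ x - η₂ x with hv
    have hseg : ∀ s ∈ Set.Icc (0:ℝ) 1, a + s • v ∈ Ω := by
      intro s hs
      rw [ha, hv, hπg s x]
      exact (hπ s hs).1 hx
    have hγΩcont : ContinuousOn (fun s : ℝ => g (a + s • v)) (Set.Icc 0 1) :=
      hgcont.comp (by fun_prop) hseg
    have hint1 : IntegrableOn (fun s : ℝ => g (a + s • v)) (Set.Ioc 0 1) :=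
      (hγΩcont.integrableOn_Icc).mono_set Set.Ioc_subset_Icc_self
    have hint2 : IntegrableOn (fun s : ℝ => g (a + s • v) ^ 2) (Set.Ioc 0 1) :=
      ((hγΩcont.pow 2).integrableOn_Icc).mono_set Set.Ioc_subset_Icc_self
    have h1 : ‖u (η₁ x) - u (η₂ x)‖ ≤ (∫ s in Set.Ioc (0:ℝ) 1, g (a + s • v)) * ‖v‖ := by
      have h := segment_estimate hΩ hu hseg
      rw [ha, hv, add_sub_cancel] at h
      rw [intervalIntegral.integral_of_le zero_le_one] at h
      exact h
    have hintnn : 0 ≤ ∫ s in Set.Ioc (0:ℝ) 1, g (a + s • v) :=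
      setIntegral_nonneg measurableSet_Ioc fun s _ => hg0 _
    have h2 : ‖u (η₁ x) - u (η₂ x)‖ ≤ (∫ s in Set.Ioc (0:ℝ) 1, g (a + s • v)) * S :=
      h1.trans (mul_le_mul_of_nonneg_left (hS x hx) hintnn)
    have h3 : ‖u (η₁ x) - u (η₂ x)‖ ^ 2 ≤
        (∫ s in Set.Ioc (0:ℝ) 1, g (a + s • v) ^ 2) * S ^ 2 := by
      calc ‖u (η₁ x) - u (η₂ x)‖ ^ 2
          ≤ ((∫ s in Set.Ioc (0:ℝ) 1, g (a + s • v)) * S) ^ 2 :=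
            pow_le_pow_left₀ (norm_nonneg _) h2 2
        _ = (∫ s in Set.Ioc (0:ℝ) 1, g (a + s • v)) ^ 2 * S ^ 2 := mul_pow _ _ _
        _ ≤ (∫ s in Set.Ioc (0:ℝ) 1, g (a + s • v) ^ 2) * S ^ 2 := by
            apply mul_le_mul_of_nonneg_right _ (sq_nonneg S)
            exact sq_integral_le_prob _ hint1 hint2
    calc ENNReal.ofReal (‖u (η₁ x) - u (η₂ x)‖ ^ 2)
        ≤ ENNReal.ofReal ((∫ s in Set.Ioc (0:ℝ) 1, g (a + s • v) ^ 2) * S ^ 2) :=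
          ENNReal.ofReal_le_ofReal h3
      _ = ENNReal.ofReal (∫ s in Set.Ioc (0:ℝ) 1, g (a + s • v) ^ 2) *
            ENNReal.ofReal (S ^ 2) := ENNReal.ofReal_mul
              (setIntegral_nonneg measurableSet_Ioc fun s _ => by positivity)
      _ = (∫⁻ s in Set.Ioc (0:ℝ) 1, ENNReal.ofReal (g (s • η₁ x + (1 - s) • η₂ x) ^ 2)) *
            ENNReal.ofReal (S ^ 2) := by
          rw [ofReal_integral_eq_lintegral_ofReal hint2
            (Filter.Eventually.of_forall fun s => by positivity)]
          congr 1
          apply lintegral_congr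
          intro s
          rw [ha, hv, hπg s x]
  -- continuity of the integrand on Q ×ˢ Icc
  have hη₁c : ContinuousOn η₁ Q := by
    intro x hx
    have d1 := ((hπ 1 ⟨zero_le_one, le_refl 1⟩).2.2 x hx).1
    have e1 : (fun x' => (1:ℝ) • η₁ x' + (1 - (1:ℝ)) • η₂ x') = η₁ := by
      funext x'; simp
    rw [e1] at d1
    exact d1.continuousAt.continuousWithinAt
  have hη₂c : ContinuousOn η₂ Q := by
    intro x hx
    have d0 := ((hπ 0 ⟨le_refl 0, zero_le_one⟩).2.2 x hx).1
    have e0 : (fun x' => (0:ℝ) • η₁ x' + (1 - (0:ℝ)) • η₂ x') = η₂ := by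
      funext x'; simp
    rw [e0] at d0
    exact d0.continuousAt.continuousWithinAt
  have hπprodcont : ContinuousOn
      (fun p : EuclideanSpace ℝ (Fin n) × ℝ => p.2 • η₁ p.1 + (1 - p.2) • η₂ p.1)
      (Q ×ˢ Set.Icc (0:ℝ) 1) := by
    apply ContinuousOn.add
    · exact continuousOn_snd.smul (hη₁c.comp continuousOn_fst fun p hp => hp.1)
    · exact (continuousOn_const.sub continuousOn_snd).smul
        (hη₂c.comp continuousOn_fst fun p hp => hp.1)
  have hmapsprod : Set.MapsTo
      (fun p : EuclideanSpace ℝ (Fin n) × ℝ => p.2 • η₁ p.1 + (1 - p.2) • η₂ p.1)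
      (Q ×ˢ Set.Icc (0:ℝ) 1) Ω :=
    fun p hp => (hπ p.2 hp.2).1 hp.1
  have hGcont : ContinuousOn
      (fun p : EuclideanSpace ℝ (Fin n) × ℝ =>
        ENNReal.ofReal (g (p.2 • η₁ p.1 + (1 - p.2) • η₂ p.1) ^ 2))
      (Q ×ˢ Set.Icc (0:ℝ) 1) :=
    ENNReal.continuous_ofReal.comp_continuousOn
      ((hgcont.comp hπprodcont hmapsprod).pow 2)
  have hGm : AEMeasurable (Function.uncurry fun (x : EuclideanSpace ℝ (Fin n)) (s : ℝ) =>
      ENNReal.ofReal (g (s • η₁ x + (1 - s) • η₂ x) ^ 2))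
      ((volume.restrict Q).prod (volume.restrict (Set.Ioc (0:ℝ) 1))) := by
    have h1 := hGcont.aemeasurable
      (μ := (volume : Measure (EuclideanSpace ℝ (Fin n) × ℝ))) (hQ.prod measurableSet_Icc)
    have h2 : (volume.restrict Q).prod (volume.restrict (Set.Ioc (0:ℝ) 1)) ≤
        (volume : Measure (EuclideanSpace ℝ (Fin n) × ℝ)).restrict
          (Q ×ˢ Set.Icc (0:ℝ) 1) := by
      rw [Measure.volume_eq_prod, Measure.prod_restrict]
      exact Measure.restrict_mono (Set.prod_mono subset_rfl Set.Ioc_subset_Icc_self) le_rfl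
    exact (h1.mono_measure h2)
  -- change of variables for fixed s
  set L : ENNReal := ∫⁻ y in Ω, ENNReal.ofReal (g y ^ 2) with hL
  have hεne : ENNReal.ofReal ε₀ ≠ 0 := (ENNReal.ofReal_pos.2 hε₀).ne'
  have inner : ∀ s ∈ Set.Ioc (0:ℝ) 1,
      (∫⁻ x in Q, ENNReal.ofReal (g (s • η₁ x + (1 - s) • η₂ x) ^ 2)) ≤
        (ENNReal.ofReal ε₀)⁻¹ * L := by
    intro s hs
    obtain ⟨hmaps, hinj, hdet⟩ := hπ s (Set.Ioc_subset_Icc_self hs)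
    have hder : ∀ x ∈ Q, HasFDerivWithinAt (fun x' => s • η₁ x' + (1 - s) • η₂ x')
        (fderiv ℝ (fun x' => s • η₁ x' + (1 - s) • η₂ x') x) Q x :=
      fun x hx => ((hdet x hx).1.hasFDerivAt).hasFDerivWithinAt
    have cov := lintegral_image_eq_lintegral_abs_det_fderiv_mul volume hQ hder hinj
      (fun y => ENNReal.ofReal (g y ^ 2))
    calc (∫⁻ x in Q, ENNReal.ofReal (g (s • η₁ x + (1 - s) • η₂ x) ^ 2))
        = ∫⁻ x in Q, (ENNReal.ofReal ε₀)⁻¹ *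
            (ENNReal.ofReal ε₀ * ENNReal.ofReal (g (s • η₁ x + (1 - s) • η₂ x) ^ 2)) := by
          apply lintegral_congr
          intro x
          rw [← mul_assoc, ENNReal.inv_mul_cancel hεne ENNReal.ofReal_ne_top, one_mul]
      _ = (ENNReal.ofReal ε₀)⁻¹ * ∫⁻ x in Q,
            ENNReal.ofReal ε₀ * ENNReal.ofReal (g (s • η₁ x + (1 - s) • η₂ x) ^ 2) :=
          lintegral_const_mul' _ _ (ENNReal.inv_ne_top.2 hεne)
      _ ≤ (ENNReal.ofReal ε₀)⁻¹ * ∫⁻ x in Q,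
            ENNReal.ofReal |(fderiv ℝ (fun x' => s • η₁ x' + (1 - s) • η₂ x') x).det| *
              ENNReal.ofReal (g (s • η₁ x + (1 - s) • η₂ x) ^ 2) := by
          apply mul_le_mul_right
          apply lintegral_mono_ae
          refine (ae_restrict_iff' hQ).2 (Filter.Eventually.of_forall fun x hx => ?_)
          exact mul_le_mul_left
            (ENNReal.ofReal_le_ofReal ((hdet x hx).2.trans (le_abs_self _))) _
      _ = (ENNReal.ofReal ε₀)⁻¹ *
            ∫⁻ y in (fun x' => s • η₁ x' + (1 - s) • η₂ x') '' Q,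
              ENNReal.ofReal (g y ^ 2) := by rw [cov]
      _ ≤ (ENNReal.ofReal ε₀)⁻¹ * L := by
          apply mul_le_mul_right
          exact lintegral_mono_set hmaps.image_subset
  -- assembling
  have swap : (∫⁻ x in Q, ∫⁻ s in Set.Ioc (0:ℝ) 1,
        ENNReal.ofReal (g (s • η₁ x + (1 - s) • η₂ x) ^ 2)) =
      ∫⁻ s in Set.Ioc (0:ℝ) 1, ∫⁻ x in Q,
        ENNReal.ofReal (g (s • η₁ x + (1 - s) • η₂ x) ^ 2) :=
    lintegral_lintegral_swap hGm
  have hLI : L = ENNReal.ofReal I :=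
    (ofReal_integral_eq_lintegral_ofReal hint
      (Filter.Eventually.of_forall fun y => by positivity)).symm
  have Abound : (∫⁻ x in Q, ENNReal.ofReal (‖u (η₁ x) - u (η₂ x)‖ ^ 2)) ≤
      ENNReal.ofReal (1 / ε₀ * I * S ^ 2) := by
    calc (∫⁻ x in Q, ENNReal.ofReal (‖u (η₁ x) - u (η₂ x)‖ ^ 2))
        ≤ ∫⁻ x in Q, (∫⁻ s in Set.Ioc (0:ℝ) 1,
            ENNReal.ofReal (g (s • η₁ x + (1 - s) • η₂ x) ^ 2)) * ENNReal.ofReal (S ^ 2) :=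
          lintegral_mono_ae ((ae_restrict_iff' hQ).2 (Filter.Eventually.of_forall key))
      _ = (∫⁻ x in Q, ∫⁻ s in Set.Ioc (0:ℝ) 1,
            ENNReal.ofReal (g (s • η₁ x + (1 - s) • η₂ x) ^ 2)) * ENNReal.ofReal (S ^ 2) :=
          lintegral_mul_const' _ _ ENNReal.ofReal_ne_top
      _ = (∫⁻ s in Set.Ioc (0:ℝ) 1, ∫⁻ x in Q,
            ENNReal.ofReal (g (s • η₁ x + (1 - s) • η₂ x) ^ 2)) * ENNReal.ofReal (S ^ 2) := by
          rw [swap]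
      _ ≤ (∫⁻ _s in Set.Ioc (0:ℝ) 1, (ENNReal.ofReal ε₀)⁻¹ * L) * ENNReal.ofReal (S ^ 2) := by
          apply mul_le_mul_left
          apply lintegral_mono_ae
          exact (ae_restrict_iff' measurableSet_Ioc).2 (Filter.Eventually.of_forall inner)
      _ = (ENNReal.ofReal ε₀)⁻¹ * L * ENNReal.ofReal (S ^ 2) := by
          rw [setLIntegral_const]
          simp [Real.volume_Ioc]
      _ = ENNReal.ofReal (1 / ε₀ * I * S ^ 2) := by
          rw [hLI, ← ENNReal.ofReal_inv_of_pos hε₀, ← ENNReal.ofReal_mul (by positivity),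
            ← ENNReal.ofReal_mul (by positivity), one_div]
  by_cases hmeas : AEStronglyMeasurable (fun x => ‖u (η₁ x) - u (η₂ x)‖ ^ 2)
      (volume.restrict Q)
  · rw [integral_eq_lintegral_of_nonneg_ae (Filter.Eventually.of_forall fun x => by positivity)
      hmeas]
    exact ENNReal.toReal_le_of_le_ofReal hRHS0 Abound
  · rw [integral_undef (fun h => hmeas h.aestronglyMeasurable)]
    exact hRHS0
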